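/- Let s₀, s₁, …, s_κ be complex p×q matrices and define the reciprocal sequence r₀, …, r_κ by r₀ = s₀⁺ (Moore–Penrose inverse) and r_j = −s₀⁺ · Σ_{ℓ=0}^{j−1} s_{j−ℓ} r_ℓ for j ≥ 1. Then for all j ∈ {1,…,κ}, r_j = Σ_{ℓ=1}^{j} (−1)^ℓ Σ_{(k₁,…,k_ℓ)} s₀⁺ s_{k₁} s₀⁺ s_{k₂} ⋯ s₀⁺ s_{k_ℓ} s₀⁺, where the inner sum runs over all ordered ℓ-tuples (k₁,…,k_ℓ) of positive integers with k₁ + ⋯ + k_ℓ = j. -/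

import Mathlib

open Matrix

/-- `X` is the Moore–Penrose inverse of `A`. -/
def IsMPInv {m n : Type*} [Fintype m] [Fintype n]
    (A : Matrix m n ℂ) (X : Matrix n m ℂ) : Prop :=
  A * X * A = A ∧ X * A * X = X ∧ (A * X)ᴴ = A * X ∧ (X * A)ᴴ = X * A

section Aux

variable {p q : ℕ} (s : ℕ → Matrix (Fin p) (Fin q) ℂ) (sInv : Matrix (Fin q) (Fin p) ℂ)

/-- The product word `sInv * (s k₁ * sInv) * ⋯ * (s kℓ * sInv)`. -/
noncomputable def PW (ℓ : ℕ) (k : Fin ℓ → ℕ) : Matrix (Fin q) (Fin p) ℂ :=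
  sInv * (List.ofFn fun i : Fin ℓ => s (k i) * sInv).prod

/-- Compositions of `j` into `ℓ` positive parts. -/
def Cset (ℓ j : ℕ) : Finset (Fin ℓ → ℕ) :=
  (Finset.Nat.antidiagonalTuple ℓ j).filter (fun k => ∀ i, 0 < k i)

lemma mem_Cset {ℓ j : ℕ} {k : Fin ℓ → ℕ} :
    k ∈ Cset ℓ j ↔ (∑ i, k i = j ∧ ∀ i, 0 < k i) := by
  simp [Cset, Finset.Nat.mem_antidiagonalTuple]

lemma Cset_eq_empty {ℓ j : ℕ} (h : j < ℓ) : Cset ℓ j = ∅ := by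
  ext k
  simp only [mem_Cset, Finset.notMem_empty, iff_false, not_and]
  intro hsum hpos
  have : ℓ ≤ j := by
    calc ℓ = ∑ _i : Fin ℓ, 1 := by simp
    _ ≤ ∑ i, k i := Finset.sum_le_sum fun i _ => hpos i
    _ = j := hsum
  omega

lemma PW_cons (m : ℕ) (a : ℕ) (k : Fin m → ℕ) :
    PW s sInv (m + 1) (Fin.cons a k) = sInv * s a * PW s sInv m k := by
  simp only [PW, List.ofFn_succ, Fin.cons_zero, Fin.cons_succ, List.prod_cons]
  simp [Matrix.mul_assoc]

/-- Splitting off the first part of a composition. -/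
lemma sum_Cset_succ (m j : ℕ) (f : (Fin (m + 1) → ℕ) → Matrix (Fin q) (Fin p) ℂ) :
    ∑ k ∈ Cset (m + 1) j, f k
      = ∑ a ∈ Finset.Icc 1 j, ∑ k ∈ Cset m (j - a), f (Fin.cons a k) := by
  rw [Finset.sum_sigma']
  refine (Finset.sum_nbij' (fun x => Fin.cons x.1 x.2)
      (fun k => ⟨k 0, Fin.tail k⟩) ?_ ?_ ?_ ?_ ?_).symm
  · rintro ⟨a, k⟩ hx
    simp only [Finset.mem_sigma, Finset.mem_Icc, mem_Cset] at hx ⊢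
    obtain ⟨⟨ha1, haj⟩, hsum, hpos⟩ := hx
    refine ⟨?_, ?_⟩
    · rw [Fin.sum_cons, hsum]; omega
    · intro i
      refine Fin.cases ?_ ?_ i
      · show 0 < a; exact ha1
      · intro i'; simpa using hpos i'
  · intro k hk
    simp only [mem_Cset] at hk
    obtain ⟨hsum, hpos⟩ := hk
    rw [Fin.sum_univ_succ] at hsum
    simp only [Finset.mem_sigma, Finset.mem_Icc, mem_Cset]
    have h0 := hpos 0
    refine ⟨⟨h0, by omega⟩, ?_, fun i => hpos i.succ⟩
    show ∑ i : Fin m, k i.succ = j - k 0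
    omega
  · rintro ⟨a, k⟩ _
    simp [Fin.tail_cons]
  · intro k _
    exact Fin.cons_self_tail k
  · rintro ⟨a, k⟩ _
    rfl

/-- The explicit formula as a function (with value `sInv` at `0`). -/
noncomputable def Fm (j : ℕ) : Matrix (Fin q) (Fin p) ℂ :=
  if j = 0 then sInv else
    ∑ ℓ ∈ Finset.Icc 1 j, (-1 : ℂ) ^ ℓ • ∑ k ∈ Cset ℓ j, PW s sInv ℓ k

lemma sum_Icc_shift {M : Type*} [AddCommMonoid M] (n : ℕ) (g : ℕ → M) :
    ∑ ℓ ∈ Finset.Icc 1 n, g ℓ = ∑ m ∈ Finset.range n, g (m + 1) := by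
  refine Finset.sum_nbij' (fun ℓ => ℓ - 1) (fun m => m + 1) ?_ ?_ ?_ ?_ ?_ <;>
    simp only [Finset.mem_Icc, Finset.mem_range] <;> intros <;> first | omega |
      (congr 1; omega)

lemma Fm_rec (j : ℕ) (hj : 1 ≤ j) :
    Fm s sInv j = -(sInv * ∑ ℓ ∈ Finset.range j, s (j - ℓ) * Fm s sInv ℓ) := by
  obtain ⟨n, rfl⟩ : ∃ n, j = n + 1 := ⟨j - 1, by omega⟩
  clear hj
  -- compute the right-hand side
  rw [Finset.sum_range_succ']
  have h0 : Fm s sInv 0 = sInv := by simp [Fm]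
  rw [h0]
  simp only [Nat.sub_zero]
  have hFi : ∀ i ∈ Finset.range n,
      s (n + 1 - (i + 1)) * Fm s sInv (i + 1)
        = ∑ m ∈ Finset.Icc 1 n, (-1 : ℂ) ^ m •
            ∑ k ∈ Cset m (i + 1), s (n - i) * PW s sInv m k := by
    intro i hi
    rw [Finset.mem_range] at hi
    have : n + 1 - (i + 1) = n - i := by omega
    rw [this, Fm, if_neg (by omega), Matrix.mul_sum]
    rw [Finset.sum_subset (Finset.Icc_subset_Icc_right (by omega : i + 1 ≤ n))]
    · exact Finset.sum_congr rfl fun m _ => by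
        rw [Matrix.mul_smul, Matrix.mul_sum]
    · intro m hm hm'
      simp only [Finset.mem_Icc] at hm hm'
      rw [Cset_eq_empty (by omega)]
      simp
  rw [Finset.sum_congr rfl hFi]
  -- rearrange
  rw [Finset.sum_comm]
  rw [Matrix.mul_add, Matrix.mul_sum, neg_add]
  -- left-hand side
  rw [Fm, if_neg (by omega), sum_Icc_shift]
  rw [Finset.sum_range_succ']
  congr 1
  · -- the terms with ℓ ≥ 2 match  -∑ sInv * (…)
    rw [← Finset.sum_neg_distrib, sum_Icc_shift]
    refine Finset.sum_congr rfl fun m hm => ?_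
    rw [Finset.mem_range] at hm
    -- LHS term : (-1)^(m+1+1) • ∑_{k ∈ Cset (m+2) (n+1)} PW
    -- RHS term : -(sInv * ∑_{i ∈ range n} (-1)^(m+1) • ∑_{k ∈ Cset (m+1) (i+1)} s (n-i) * PW k)
    rw [sum_Cset_succ]
    have hext : ∑ a ∈ Finset.Icc 1 (n + 1), ∑ k ∈ Cset (m + 1) (n + 1 - a),
          PW s sInv (m + 2) (Fin.cons a k)
        = ∑ a ∈ Finset.Icc 1 n, ∑ k ∈ Cset (m + 1) (n + 1 - a),
          PW s sInv (m + 2) (Fin.cons a k) := by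
      rw [← Finset.sum_subset (Finset.Icc_subset_Icc_right (by omega : n ≤ n + 1))]
      intro a ha ha'
      simp only [Finset.mem_Icc] at ha ha'
      have : n + 1 - a = 0 := by omega
      rw [this, Cset_eq_empty (by omega)]
      simp
    rw [hext]
    have hre : ∑ a ∈ Finset.Icc 1 n, ∑ k ∈ Cset (m + 1) (n + 1 - a),
          PW s sInv (m + 2) (Fin.cons a k)
        = ∑ i ∈ Finset.range n, ∑ k ∈ Cset (m + 1) (i + 1),
          PW s sInv (m + 2) (Fin.cons (n - i) k) := by
      refine Finset.sum_nbij' (fun a => n - a) (fun i => n - i) ?_ ?_ ?_ ?_ ?_ <;>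
        simp only [Finset.mem_Icc, Finset.mem_range]
      · intros; omega
      · intros; omega
      · intros; omega
      · intros; omega
      · intro a ha
        have h1 : n + 1 - a = n - a + 1 := by omega
        have h2 : n - (n - a) = a := by omega
        rw [h1, h2]
    rw [hre]
    rw [Finset.smul_sum, Matrix.mul_sum, ← Finset.sum_neg_distrib]
    refine Finset.sum_congr rfl fun i hi => ?_
    rw [Matrix.mul_smul]
    have hpow : (-1 : ℂ) ^ (m + 1 + 1) = -(-1 : ℂ) ^ (m + 1) := by ring
    rw [hpow, neg_smul]
    congr 1
    congr 1
    rw [Matrix.mul_sum]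
    refine Finset.sum_congr rfl fun k _ => ?_
    rw [PW_cons, Matrix.mul_assoc]
  · -- the ℓ = 1 term matches  -(sInv * (s (n+1) * sInv))
    have hC1 : Cset 1 (n + 1) = {![n + 1]} := by
      ext k
      simp only [mem_Cset, Finset.mem_singleton, Fin.sum_univ_one]
      constructor
      · rintro ⟨hsum, -⟩
        funext i
        fin_cases i
        simpa using hsum
      · rintro rfl
        exact ⟨rfl, fun i => by fin_cases i <;> simp⟩
    rw [hC1]
    simp [PW, mul_assoc]

end Aux

/-- Explicit formula for the reciprocal sequence (Theorem on non-recursive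
representation of the reciprocal sequence). -/
theorem reciprocal_explicit_formula {p q : ℕ} (κ : ℕ)
    (s : ℕ → Matrix (Fin p) (Fin q) ℂ)
    (sInv : Matrix (Fin q) (Fin p) ℂ) (hs : IsMPInv (s 0) sInv)
    (r : ℕ → Matrix (Fin q) (Fin p) ℂ)
    (hr0 : r 0 = sInv)
    (hr : ∀ j, 1 ≤ j → j ≤ κ →
      r j = -(sInv * ∑ ℓ ∈ Finset.range j, s (j - ℓ) * r ℓ)) :
    ∀ j, 1 ≤ j → j ≤ κ →
      r j = ∑ ℓ ∈ Finset.Icc 1 j, (-1 : ℂ) ^ ℓ •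
        ∑ k ∈ (Finset.Nat.antidiagonalTuple ℓ j).filter (fun k => ∀ i, 0 < k i),
          sInv * (List.ofFn fun i : Fin ℓ => s (k i) * sInv).prod := by
  have key : ∀ j, j ≤ κ → r j = Fm s sInv j := by
    intro j
    induction j using Nat.strong_induction_on with
    | _ j ih =>
      intro hjκ
      rcases Nat.eq_zero_or_pos j with rfl | hj
      · simp [hr0, Fm]
      · rw [hr j hj hjκ, Fm_rec s sInv j hj]
        congr 1
        congr 1
        refine Finset.sum_congr rfl fun ℓ hℓ => ?_
        rw [Finset.mem_range] at hℓ
        rw [ih ℓ hℓ (by omega)]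
  intro j hj hjκ
  rw [key j hjκ, Fm, if_neg (by omega)]
  rfl
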